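/- Let P(R) be the space of Borel probability measures on R with the topology of weak convergence. The set (D_0 minus M), consisting of all distributions F that belong to the maximum domain of attraction D(G_0) of the Gumbel distribution and have infinite right endpoint x_F = infty, is a set of the first Baire category (i.e., meagre) in P(R). -/

import Mathlib

open MeasureTheory Filter Topology Set NNReal

/-- The cumulative distribution function of a Borel probability measure on `ℝ`:
`F(x) = μ((-∞, x])`. -/
noncomputable def distrib (μ : ProbabilityMeasure ℝ) (x : ℝ) : ℝ :=
  (μ (Set.Iic x) : ℝ≥0)

/-- The generalized extreme value distribution function `G_γ`, with
`G_γ(x) = exp(-(1+γx)^(-1/γ))` where `1 + γx > 0` (interpreted as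
`G_0(x) = exp(-e^(-x))` when `γ = 0`). -/
noncomputable def evCdf (γ : ℝ) (x : ℝ) : ℝ :=
  if γ = 0 then Real.exp (-Real.exp (-x))
  else if 0 < 1 + γ * x then Real.exp (-(1 + γ * x) ^ (-1 / γ))
  else if 0 < γ then 0 else 1

/-- `μ` belongs to the maximum domain of attraction `D(G_γ)`: there are `a n > 0` and `b n`
such that `(F (a n * x + b n)) ^ n → G_γ x` at every continuity point `x` of `G_γ`. -/
def MemDomAttr (γ : ℝ) (μ : ProbabilityMeasure ℝ) : Prop :=
  ∃ a b : ℕ → ℝ, (∀ n, 0 < a n) ∧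
    ∀ x : ℝ, ContinuousAt (evCdf γ) x →
      Tendsto (fun n : ℕ => distrib μ (a n * x + b n) ^ n) atTop (𝓝 (evCdf γ x))

/-- The right endpoint `x_F = sup {x : F x < 1}` of a distribution, as an extended real. -/
noncomputable def rightEndpoint (μ : ProbabilityMeasure ℝ) : EReal :=
  sSup ((fun x : ℝ => (x : EReal)) '' {x : ℝ | distrib μ x < 1})

open scoped ENNReal

section Auxiliary

/-- If `p n ^ n → ρ ∈ (0,1)` with `0 ≤ p n ≤ 1`, then `n * (1 - p n) → -log ρ`. -/
lemma tail_of_pow_tendsto {p : ℕ → ℝ} {ρ : ℝ} (hρ0 : 0 < ρ) (hρ1 : ρ < 1)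
    (hp0 : ∀ n, 0 ≤ p n) (hp1 : ∀ n, p n ≤ 1)
    (h : Tendsto (fun n : ℕ => p n ^ n) atTop (𝓝 ρ)) :
    Tendsto (fun n : ℕ => (n : ℝ) * (1 - p n)) atTop (𝓝 (-Real.log ρ)) := by
  have hev : ∀ᶠ n : ℕ in atTop, 0 < p n ∧ p n < 1 := by
    have h1 : ∀ᶠ n : ℕ in atTop, ρ / 2 < p n ^ n := h.eventually_const_lt (by linarith)
    have h2 : ∀ᶠ n : ℕ in atTop, p n ^ n < (1 + ρ) / 2 := h.eventually_lt_const (by linarith)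
    filter_upwards [h1, h2, eventually_ge_atTop 1] with n hn1 hn2 hn3
    constructor
    · by_contra hc
      push_neg at hc
      have hz : p n = 0 := le_antisymm hc (hp0 n)
      rw [hz, zero_pow (by omega : n ≠ 0)] at hn1
      linarith
    · by_contra hc
      push_neg at hc
      have hpn : p n = 1 := le_antisymm (hp1 n) hc
      rw [hpn, one_pow] at hn2
      linarith
  -- n * (-log p n) → -log ρ
  have hlog : Tendsto (fun n : ℕ => (n : ℝ) * (-Real.log (p n))) atTop (𝓝 (-Real.log ρ)) := by
    have : Tendsto (fun n : ℕ => Real.log (p n ^ n)) atTop (𝓝 (Real.log ρ)) :=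
      (Real.continuousAt_log hρ0.ne').tendsto.comp h
    simp_rw [Real.log_pow] at this
    simpa [mul_neg] using this.neg
  -- p n → 1
  have hp_to_one : Tendsto p atTop (𝓝 1) := by
    have hlogp : Tendsto (fun n : ℕ => Real.log (p n)) atTop (𝓝 0) := by
      have hne : Tendsto (fun n : ℕ => ((n : ℝ) * (-Real.log (p n))) / n) atTop (𝓝 0) :=
        hlog.div_atTop tendsto_natCast_atTop_atTop
      have : ∀ᶠ n : ℕ in atTop, ((n : ℝ) * (-Real.log (p n))) / n = -Real.log (p n) := by
        filter_upwards [eventually_ge_atTop 1] with n hn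
        have hn0 : (n:ℝ) ≠ 0 := Nat.cast_ne_zero.mpr (by omega)
        field_simp
      rw [tendsto_congr' this] at hne
      simpa using hne.neg
    have := (Real.continuous_exp.tendsto 0).comp hlogp
    simp only [Real.exp_zero] at this
    refine this.congr' ?_
    filter_upwards [hev] with n hn
    simp [Real.exp_log hn.1]
  -- sandwich
  have hlower : Tendsto (fun n : ℕ => ((n : ℝ) * (-Real.log (p n))) * p n) atTop (𝓝 (-Real.log ρ)) := by
    simpa using hlog.mul hp_to_one
  apply tendsto_of_tendsto_of_tendsto_of_le_of_le' hlower hlog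
  · filter_upwards [hev] with n hn
    have key : p n * (-Real.log (p n)) ≤ 1 - p n := by
      have h1 : Real.log (p n)⁻¹ ≤ (p n)⁻¹ - 1 := Real.log_le_sub_one_of_pos (inv_pos.2 hn.1)
      rw [Real.log_inv] at h1
      have := mul_le_mul_of_nonneg_left h1 hn.1.le
      calc p n * (-Real.log (p n)) ≤ p n * ((p n)⁻¹ - 1) := this
        _ = 1 - p n := by rw [mul_sub, mul_inv_cancel₀ hn.1.ne', mul_one]
    calc (n : ℝ) * (-Real.log (p n)) * p n = (n : ℝ) * (p n * (-Real.log (p n))) := by ring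
      _ ≤ (n : ℝ) * (1 - p n) := by
          apply mul_le_mul_of_nonneg_left key (by positivity)
  · filter_upwards [hev] with n hn
    have key : 1 - p n ≤ -Real.log (p n) := by
      have := Real.log_le_sub_one_of_pos hn.1
      linarith
    apply mul_le_mul_of_nonneg_left key (by positivity)

lemma distrib_mono (μ : ProbabilityMeasure ℝ) : Monotone (distrib μ) :=
  fun x y h => NNReal.coe_le_coe.2 (μ.apply_mono (Iic_subset_Iic.2 h))

lemma distrib_nonneg (μ : ProbabilityMeasure ℝ) (x : ℝ) : 0 ≤ distrib μ x :=
  (μ (Set.Iic x) : ℝ≥0).coe_nonneg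

lemma distrib_le_one (μ : ProbabilityMeasure ℝ) (x : ℝ) : distrib μ x ≤ 1 := by
  have := μ.apply_le_one (Set.Iic x)
  exact_mod_cast this

lemma distrib_eq_toReal (μ : ProbabilityMeasure ℝ) (x : ℝ) :
    distrib μ x = (μ.toMeasure (Set.Iic x)).toReal := by
  rw [distrib, ← μ.ennreal_coeFn_eq_coeFn_toMeasure, ENNReal.coe_toReal]

lemma distrib_tendsto_one (μ : ProbabilityMeasure ℝ) :
    Tendsto (distrib μ) atTop (𝓝 1) := by
  have h : Tendsto (fun x => μ.toMeasure (Set.Iic x)) atTop (𝓝 (μ.toMeasure univ)) :=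
    tendsto_measure_Iic_atTop _
  rw [measure_univ] at h
  have h2 : Tendsto (fun x => (μ.toMeasure (Set.Iic x)).toReal) atTop (𝓝 (1 : ℝ≥0∞).toReal) :=
    (ENNReal.tendsto_toReal ENNReal.one_ne_top).comp h
  simp only [ENNReal.toReal_one] at h2
  exact h2.congr (fun x => (distrib_eq_toReal μ x).symm)

lemma evCdf_zero_eq : evCdf 0 = fun x => Real.exp (-Real.exp (-x)) := by
  funext x; simp [evCdf]

lemma evCdf_zero_continuousAt (x : ℝ) : ContinuousAt (evCdf 0) x := by
  rw [evCdf_zero_eq]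
  fun_prop

/-- Rapid variation of the tail. -/
lemma rapid {μ : ProbabilityMeasure ℝ} (h : MemDomAttr 0 μ)
    (h2 : ∀ x, distrib μ x < 1) :
    ∃ N : ℕ, ∀ x : ℝ, (N : ℝ) ≤ x → 2 * (1 - distrib μ (2 * x)) ≤ 1 - distrib μ x := by
  set F := distrib μ with hF
  by_contra hcon
  push_neg at hcon
  choose xs hxs1 hxs2 using hcon
  obtain ⟨a, b, ha, hconv⟩ := h
  -- tail limits at x = -1, 1, -6
  have key : ∀ x : ℝ, Tendsto (fun n : ℕ => (n : ℝ) * (1 - F (a n * x + b n))) atTop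
      (𝓝 (Real.exp (-x))) := by
    intro x
    have hc := hconv x (evCdf_zero_continuousAt x)
    have hρ0 : 0 < evCdf 0 x := by rw [evCdf_zero_eq]; positivity
    have hρ1 : evCdf 0 x < 1 := by
      rw [evCdf_zero_eq]
      simp only
      rw [← Real.exp_zero]
      apply Real.exp_lt_exp.2
      simp [Real.exp_pos]
    have := tail_of_pow_tendsto hρ0 hρ1 (fun n => distrib_nonneg μ _)
      (fun n => distrib_le_one μ _) hc
    have hlog : -Real.log (evCdf 0 x) = Real.exp (-x) := by
      rw [evCdf_zero_eq]
      simp [Real.log_exp]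
    rwa [hlog] at this
  -- xs tendsto atTop
  have hxs_top : Tendsto xs atTop atTop :=
    tendsto_atTop_mono hxs1 tendsto_natCast_atTop_atTop
  -- the scaling sequence n k
  set s : ℕ → ℝ := fun k => 1 - F (xs k) with hs
  have hs_pos : ∀ k, 0 < s k := fun k => by simp only [hs]; linarith [h2 (xs k)]
  set n : ℕ → ℕ := fun k => ⌈(s k)⁻¹⌉₊ with hn
  have hs_le_one : ∀ k, s k ≤ 1 := fun k => by
    have := distrib_nonneg μ (xs k); simp only [hs]; linarith
  have hn_ge : ∀ k, (s k)⁻¹ ≤ (n k : ℝ) := fun k => Nat.le_ceil _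
  have hlow : ∀ k, 1 ≤ (n k : ℝ) * s k := by
    intro k
    have := mul_le_mul_of_nonneg_right (hn_ge k) (hs_pos k).le
    rwa [inv_mul_cancel₀ (hs_pos k).ne'] at this
  have hup : ∀ k, (n k : ℝ) * s k ≤ 2 := by
    intro k
    have hceil : (n k : ℝ) < (s k)⁻¹ + 1 :=
      Nat.ceil_lt_add_one (inv_nonneg.2 (hs_pos k).le)
    have := mul_le_mul_of_nonneg_right hceil.le (hs_pos k).le
    rw [add_mul, inv_mul_cancel₀ (hs_pos k).ne', one_mul] at this
    have := hs_le_one k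
    linarith
  -- n k → ∞
  have hs_to_zero : Tendsto s atTop (𝓝 0) := by
    have h1 : Tendsto (fun k => F (xs k)) atTop (𝓝 1) := (distrib_tendsto_one μ).comp hxs_top
    have h2' := (tendsto_const_nhds (x := (1:ℝ))).sub h1
    simpa [hs] using h2'
  have hn_top : Tendsto n atTop atTop := by
    rw [← tendsto_natCast_atTop_iff (R := ℝ)]
    apply tendsto_atTop_mono hn_ge
    apply Tendsto.inv_tendsto_nhdsGT_zero
    rw [tendsto_nhdsWithin_iff]
    exact ⟨hs_to_zero, Eventually.of_forall (fun k => hs_pos k)⟩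
  -- composed tail limits along n k
  have T1 : Tendsto (fun k => (n k : ℝ) * (1 - F (a (n k) * (-1) + b (n k)))) atTop
      (𝓝 (Real.exp 1)) := by
    have := (key (-1)).comp hn_top
    simpa [Function.comp_def] using this
  have T2 : Tendsto (fun k => (n k : ℝ) * (1 - F (a (n k) * 1 + b (n k)))) atTop
      (𝓝 (Real.exp (-1))) := (key 1).comp hn_top
  have T3 : Tendsto (fun k => (n k : ℝ) * (1 - F (a (n k) * (-6) + b (n k)))) atTop
      (𝓝 (Real.exp 6)) := by
    have := (key (-6)).comp hn_top
    simpa [Function.comp_def] using this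
  have e_gt_two : (2:ℝ) < Real.exp 1 := by
    have := Real.exp_one_gt_d9
    linarith
  have ev1 : ∀ᶠ k in atTop, 2 < (n k : ℝ) * (1 - F (a (n k) * (-1) + b (n k))) :=
    T1.eventually_const_lt e_gt_two
  have ev2 : ∀ᶠ k in atTop, (n k : ℝ) * (1 - F (a (n k) * 1 + b (n k))) < 1/2 := by
    apply T2.eventually_lt_const
    rw [Real.exp_neg]
    rw [inv_lt_comm₀ (Real.exp_pos 1) (by norm_num)]
    norm_num
    linarith
  -- the two geometric consequences
  have evA : ∀ᶠ k in atTop, b (n k) - a (n k) ≤ xs k := by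
    filter_upwards [ev1] with k hk
    by_contra hlt
    push_neg at hlt
    have hmono : F (xs k) ≤ F (a (n k) * (-1) + b (n k)) := by
      apply distrib_mono μ
      linarith
    have h1 : 1 - F (a (n k) * (-1) + b (n k)) ≤ s k := by
      simp only [hs]; linarith
    have h3 : (n k : ℝ) * (1 - F (a (n k) * (-1) + b (n k))) ≤ (n k : ℝ) * s k :=
      mul_le_mul_of_nonneg_left h1 (Nat.cast_nonneg _)
    have := hup k
    linarith
  have evB : ∀ᶠ k in atTop, 2 * xs k ≤ a (n k) + b (n k) := by
    filter_upwards [ev2] with k hk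
    by_contra hlt
    push_neg at hlt
    have hmono : F (a (n k) * 1 + b (n k)) ≤ F (2 * xs k) := by
      apply distrib_mono μ
      linarith
    have h1 : 1 - F (2 * xs k) ≤ 1 - F (a (n k) * 1 + b (n k)) := by linarith
    have h2' : s k < 2 * (1 - F (2 * xs k)) := hxs2 k
    have h3 : (n k : ℝ) * (1 - F (2 * xs k)) ≤ (n k : ℝ) * (1 - F (a (n k) * 1 + b (n k))) :=
      mul_le_mul_of_nonneg_left h1 (Nat.cast_nonneg _)
    have h4 : (n k : ℝ) * s k ≤ (n k : ℝ) * (2 * (1 - F (2 * xs k))) :=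
      mul_le_mul_of_nonneg_left h2'.le (Nat.cast_nonneg _)
    have := hlow k
    nlinarith
  -- far tail blows up
  have hgrow : Tendsto (fun k => (n k : ℝ) * (1 - F 0)) atTop atTop := by
    apply Tendsto.atTop_mul_const (by linarith [h2 (0:ℝ)] : 0 < 1 - F 0)
    exact tendsto_natCast_atTop_iff.2 hn_top
  have ev3 : ∀ᶠ k in atTop, Real.exp 6 + 1 < (n k : ℝ) * (1 - F 0) :=
    hgrow.eventually_gt_atTop _
  have ev4 : ∀ᶠ k in atTop, (n k : ℝ) * (1 - F (a (n k) * (-6) + b (n k))) < Real.exp 6 + 1 :=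
    T3.eventually_lt_const (by linarith)
  have ev5 : ∀ᶠ k in atTop, 0 ≤ xs k := by
    filter_upwards with k
    exact le_trans (by positivity) (hxs1 k)
  obtain ⟨k, hA, hB, h3, ⟨h4, h5⟩⟩ := (evA.and (evB.and (ev3.and (ev4.and ev5)))).exists
  -- conclude
  have ha6 : a (n k) * (-6) + b (n k) ≤ 0 := by linarith
  have hmono : F (a (n k) * (-6) + b (n k)) ≤ F 0 := distrib_mono μ ha6
  have : (n k : ℝ) * (1 - F 0) ≤ (n k : ℝ) * (1 - F (a (n k) * (-6) + b (n k))) :=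
    mul_le_mul_of_nonneg_left (by linarith) (Nat.cast_nonneg _)
  linarith

/-- The "slow tail decay at scale ≥ N is forbidden" sets. -/
def badSet (N : ℕ) : Set (ProbabilityMeasure ℝ) :=
  {μ | ∀ x : ℝ, (N : ℝ) ≤ x →
    2 * μ.toMeasure (Set.Ioi (2 * x)) ≤ μ.toMeasure (Set.Ici x)}

lemma badSet_closed (N : ℕ) : IsClosed (badSet N) := by
  apply IsSeqClosed.isClosed
  intro μs μ hmem hlim x hx
  have key1 : μ.toMeasure (Set.Ioi (2 * x)) ≤
      atTop.liminf (fun k => (μs k).toMeasure (Set.Ioi (2 * x))) :=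
    ProbabilityMeasure.le_liminf_measure_open_of_tendsto hlim isOpen_Ioi
  have key2 : atTop.limsup (fun k => (μs k).toMeasure (Set.Ici x)) ≤ μ.toMeasure (Set.Ici x) :=
    ProbabilityMeasure.limsup_measure_closed_le_of_tendsto hlim isClosed_Ici
  calc 2 * μ.toMeasure (Set.Ioi (2 * x))
      ≤ 2 * atTop.liminf (fun k => (μs k).toMeasure (Set.Ioi (2 * x))) := by
        exact mul_le_mul_right key1 2
    _ = atTop.liminf (fun k => 2 * (μs k).toMeasure (Set.Ioi (2 * x))) := by
        have hm : Monotone (fun z : ℝ≥0∞ => 2 * z) := fun u v h => mul_le_mul_right h 2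
        exact hm.map_liminf_of_continuousAt _
          ((ENNReal.continuous_const_mul (by norm_num)).continuousAt)
    _ ≤ atTop.liminf (fun k => (μs k).toMeasure (Set.Ici x)) :=
        liminf_le_liminf (Eventually.of_forall (fun k => hmem k x hx))
    _ ≤ atTop.limsup (fun k => (μs k).toMeasure (Set.Ici x)) := liminf_le_limsup
    _ ≤ μ.toMeasure (Set.Ici x) := key2

/-- mixture of a probability measure with a Dirac at `M`. -/
noncomputable def mixDirac (μ : ProbabilityMeasure ℝ) (e : ℝ) (he0 : 0 ≤ e) (he1 : e ≤ 1)
    (M : ℝ) : ProbabilityMeasure ℝ :=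
  ⟨(1 - ENNReal.ofReal e) • μ.toMeasure + ENNReal.ofReal e • Measure.dirac M, by
    constructor
    simp only [Measure.add_apply, Measure.smul_apply, smul_eq_mul, measure_univ, mul_one]
    rw [tsub_add_cancel_of_le (by simpa using he1)]⟩

lemma mixDirac_apply (μ : ProbabilityMeasure ℝ) (e : ℝ) (he0 : 0 ≤ e) (he1 : e ≤ 1)
    (M : ℝ) (s : Set ℝ) :
    (mixDirac μ e he0 he1 M).toMeasure s
      = (1 - ENNReal.ofReal e) * μ.toMeasure s + ENNReal.ofReal e * Measure.dirac M s := by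
  rfl

lemma mixDirac_tendsto (μ : ProbabilityMeasure ℝ) (e : ℕ → ℝ) (he0 : ∀ k, 0 ≤ e k)
    (he1 : ∀ k, e k ≤ 1) (M : ℕ → ℝ) (he : Tendsto e atTop (𝓝 0)) :
    Tendsto (fun k => mixDirac μ (e k) (he0 k) (he1 k) (M k)) atTop (𝓝 μ) := by
  rw [ProbabilityMeasure.tendsto_iff_forall_integral_tendsto]
  intro f
  have hint : ∀ k, ∫ x, f x ∂((mixDirac μ (e k) (he0 k) (he1 k) (M k)).toMeasure)
      = (1 - e k) * (∫ x, f x ∂μ.toMeasure) + e k * f (M k) := by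
    intro k
    have hf : Integrable f μ.toMeasure := f.integrable _
    have hfd : Integrable f (Measure.dirac (M k)) := f.integrable _
    have h1 : Integrable f ((1 - ENNReal.ofReal (e k)) • μ.toMeasure) :=
      hf.smul_measure (by
        exact ne_top_of_le_ne_top ENNReal.one_ne_top (tsub_le_self.trans le_rfl))
    have h2 : Integrable f (ENNReal.ofReal (e k) • Measure.dirac (M k)) :=
      hfd.smul_measure ENNReal.ofReal_ne_top
    show ∫ x, f x ∂((1 - ENNReal.ofReal (e k)) • μ.toMeasure
        + ENNReal.ofReal (e k) • Measure.dirac (M k)) = _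
    rw [integral_add_measure h1 h2, integral_smul_measure, integral_smul_measure,
      integral_dirac]
    rw [ENNReal.toReal_ofReal (he0 k)]
    rw [ENNReal.toReal_sub_of_le (by simpa using he1 k) ENNReal.one_ne_top]
    simp [ENNReal.toReal_ofReal (he0 k)]
  simp_rw [hint]
  have key : Tendsto (fun k => (1 - e k) * (∫ x, f x ∂μ.toMeasure) + e k * f (M k)) atTop
      (𝓝 ((1 - 0) * (∫ x, f x ∂μ.toMeasure) + 0)) := by
    apply Tendsto.add
    · exact (Tendsto.sub tendsto_const_nhds he).mul tendsto_const_nhds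
    · apply squeeze_zero_norm (fun k => ?_) (by simpa using he.mul_const ‖f‖)
      have := f.norm_coe_le_norm (M k)
      calc ‖e k * f (M k)‖ = e k * ‖f (M k)‖ := by
            rw [norm_mul, Real.norm_of_nonneg (he0 k)]
        _ ≤ e k * ‖f‖ := by
            apply mul_le_mul_of_nonneg_left this (he0 k)
  simpa using key

-- tails vanish
lemma tail_small (μ : ProbabilityMeasure ℝ) {ε : ℝ≥0∞} (hε : 0 < ε) (N : ℕ) :
    ∃ n : ℕ, (N : ℝ) ≤ (n : ℝ) ∧ μ.toMeasure (Set.Ici (n : ℝ)) < ε := by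
  have hanti : Antitone (fun n : ℕ => Set.Ici (n : ℝ)) := by
    intro m n h
    exact Ici_subset_Ici.2 (by exact_mod_cast h)
  have hempty : ⋂ n : ℕ, Set.Ici ((n : ℝ)) = ∅ := by
    apply eq_empty_iff_forall_notMem.2
    intro y hy
    simp only [mem_iInter, mem_Ici] at hy
    obtain ⟨n, hn⟩ := exists_nat_gt y
    exact absurd (hy n) (by linarith)
  have h := tendsto_measure_iInter_atTop (μ := μ.toMeasure)
    (fun n => (measurableSet_Ici).nullMeasurableSet) hanti ⟨0, measure_ne_top _ _⟩
  rw [hempty] at h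
  simp only [measure_empty] at h
  have := (h.eventually_lt_const hε).and (eventually_ge_atTop N)
  obtain ⟨n, h1, h2⟩ := this.exists
  exact ⟨n, by exact_mod_cast h2, h1⟩

lemma badSet_dense_compl (N : ℕ) : Dense (badSet N)ᶜ := by
  intro μ
  -- sequence of perturbations
  have he0 : ∀ k : ℕ, (0:ℝ) ≤ 1 / (k + 2) := fun k => by positivity
  have he1 : ∀ k : ℕ, (1:ℝ) / (k + 2) ≤ 1 := fun k => by
    rw [div_le_one (by positivity)]; linarith [Nat.cast_nonneg (α := ℝ) k]
  have hepos : ∀ k : ℕ, (0:ℝ≥0∞) < ENNReal.ofReal (1 / (k + 2)) := fun k => by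
    rw [ENNReal.ofReal_pos]; positivity
  -- choose far-out points
  choose xk hxk1 hxk2 using fun k : ℕ => tail_small μ (hepos k) N
  set M : ℕ → ℝ := fun k => 3 * (xk k : ℝ) + 1 with hM
  set ν : ℕ → ProbabilityMeasure ℝ :=
    fun k => mixDirac μ (1 / (k + 2)) (he0 k) (he1 k) (M k) with hν
  have hlim : Tendsto ν atTop (𝓝 μ) := by
    apply mixDirac_tendsto
    have h2 : Tendsto (fun k : ℕ => (k:ℝ) + 2) atTop atTop :=
      tendsto_atTop_add_const_right _ _ tendsto_natCast_atTop_atTop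
    simpa [one_div, Pi.inv_def] using h2.inv_tendsto_atTop
  have hmem : ∀ k, ν k ∈ (badSet N)ᶜ := by
    intro k
    intro hbad
    have hx0 : (0:ℝ) ≤ (xk k : ℝ) := Nat.cast_nonneg _
    have hkey := hbad (xk k) (hxk1 k)
    set ε : ℝ≥0∞ := ENNReal.ofReal (1 / (k + 2)) with hε
    have hεtop : ε ≠ ⊤ := ENNReal.ofReal_ne_top
    -- lower bound for the Ioi part
    have hMa : M k ∈ Set.Ioi (2 * (xk k : ℝ)) := by
      simp only [hM, mem_Ioi]; linarith
    have h1 : ε ≤ (ν k).toMeasure (Set.Ioi (2 * (xk k : ℝ))) := by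
      rw [hν]
      simp only
      rw [mixDirac_apply, Measure.dirac_apply_of_mem hMa]
      calc ε = 0 + ε * 1 := by simp
        _ ≤ (1 - ε) * μ.toMeasure (Set.Ioi (2 * (xk k : ℝ))) + ε * 1 := by
            apply add_le_add_left zero_le
    -- upper bound for the Ici part
    have h2 : (ν k).toMeasure (Set.Ici ((xk k : ℝ))) < 2 * ε := by
      rw [hν]
      simp only
      rw [mixDirac_apply]
      have hd : Measure.dirac (M k) (Set.Ici ((xk k : ℝ))) ≤ 1 := prob_le_one
      calc (1 - ε) * μ.toMeasure (Set.Ici ((xk k : ℝ)))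
            + ε * Measure.dirac (M k) (Set.Ici ((xk k : ℝ)))
          ≤ μ.toMeasure (Set.Ici ((xk k : ℝ))) + ε := by
            apply add_le_add
            · exact mul_le_of_le_one_left zero_le tsub_le_self
            · exact mul_le_of_le_one_right zero_le hd
        _ < ε + ε := by
            apply ENNReal.add_lt_add_right hεtop (hxk2 k)
        _ = 2 * ε := by ring
    have : 2 * ε ≤ (ν k).toMeasure (Set.Ici ((xk k : ℝ))) :=
      le_trans (mul_le_mul_right h1 2) hkey
    exact absurd h2 (not_lt.2 this)
  exact mem_closure_of_tendsto hlim (Eventually.of_forall hmem)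


lemma coe_Ioi_eq (μ : ProbabilityMeasure ℝ) (x : ℝ) :
    ((μ (Ioi x) : ℝ≥0) : ℝ) = 1 - distrib μ x := by
  have h : μ.toMeasure (Ioi x) = 1 - μ.toMeasure (Iic x) := by
    rw [← compl_Iic]
    rw [measure_compl measurableSet_Iic (measure_ne_top _ _), measure_univ]
  have h2 : (μ (Ioi x) : ℝ≥0∞) = 1 - (μ (Iic x) : ℝ≥0∞) := by
    rw [μ.ennreal_coeFn_eq_coeFn_toMeasure, μ.ennreal_coeFn_eq_coeFn_toMeasure, h]
  have hle : (μ (Iic x) : ℝ≥0∞) ≤ 1 := by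
    rw [μ.ennreal_coeFn_eq_coeFn_toMeasure]; exact prob_le_one
  have h3 : μ (Ioi x) = 1 - μ (Iic x) := by
    have := h2
    rw [← ENNReal.coe_one, ← ENNReal.coe_sub] at this
    exact_mod_cast this
  rw [distrib, h3]
  rw [NNReal.coe_sub (by exact_mod_cast hle)]
  simp

lemma distrib_lt_one_of_endpoint {μ : ProbabilityMeasure ℝ} (h : rightEndpoint μ = ⊤) :
    ∀ x, distrib μ x < 1 := by
  intro x
  by_contra hc
  push_neg at hc
  have hsup : rightEndpoint μ ≤ (x : EReal) := by
    apply sSup_le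
    rintro _ ⟨y, hy, rfl⟩
    simp only [mem_setOf_eq] at hy
    apply EReal.coe_le_coe_iff.2
    by_contra hxy
    push_neg at hxy
    have := distrib_mono μ hxy.le
    linarith
  rw [h] at hsup
  exact absurd hsup (by simp)

lemma mem_badSet {μ : ProbabilityMeasure ℝ} (h : MemDomAttr 0 μ)
    (hend : rightEndpoint μ = ⊤) : ∃ N, μ ∈ badSet N := by
  obtain ⟨N, hN⟩ := rapid h (distrib_lt_one_of_endpoint hend)
  refine ⟨N, fun x hx => ?_⟩
  have hr := hN x hx
  have hnn : (2 : ℝ≥0) * μ (Ioi (2 * x)) ≤ μ (Ici x) := by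
    have hsub : μ (Ioi x) ≤ μ (Ici x) := μ.apply_mono Ioi_subset_Ici_self
    rw [← NNReal.coe_le_coe] at hsub ⊢
    push_cast
    rw [coe_Ioi_eq]
    calc 2 * (1 - distrib μ (2 * x)) ≤ 1 - distrib μ x := hr
      _ = ((μ (Ioi x) : ℝ≥0) : ℝ) := (coe_Ioi_eq μ x).symm
      _ ≤ ((μ (Ici x) : ℝ≥0) : ℝ) := hsub
  rw [← μ.ennreal_coeFn_eq_coeFn_toMeasure, ← μ.ennreal_coeFn_eq_coeFn_toMeasure]
  rw [show (2:ℝ≥0∞) = ((2:ℝ≥0):ℝ≥0∞) from rfl, ← ENNReal.coe_mul, ENNReal.coe_le_coe]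
  exact hnn

lemma badSet_isNowhereDense (N : ℕ) : IsNowhereDense (badSet N) :=
  ((badSet_closed N).isNowhereDense_iff).2
    (interior_eq_empty_iff_dense_compl.2 (badSet_dense_compl N))

end Auxiliary

/-- The set `D_0 \ M` of distributions on `ℝ` that lie in the maximum domain of
attraction of the Gumbel distribution `G_0` and have infinite right endpoint is meagre
(of the first Baire category) in the space of Borel probability measures on `ℝ` with the
topology of weak convergence. -/
theorem meagre_gumbel_domain_of_attraction_infinite_endpoint :
    IsMeagre {μ : ProbabilityMeasure ℝ | MemDomAttr 0 μ ∧ rightEndpoint μ = ⊤} := by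
  rw [isMeagre_iff_countable_union_isNowhereDense]
  refine ⟨Set.range badSet, ?_, countable_range _, ?_⟩
  · rintro t ⟨N, rfl⟩
    exact badSet_isNowhereDense N
  · rintro μ ⟨hdom, hend⟩
    obtain ⟨N, hN⟩ := mem_badSet hdom hend
    exact ⟨badSet N, ⟨N, rfl⟩, hN⟩
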